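/- Let n ≥ 1, μ ∈ ℝⁿ, and Σ a positive definite symmetric real n×n matrix, and let ν = ν_{μ,Σ} be the corresponding Gaussian measure on ℝⁿ. With M(x) = −(1/2)Σ⁻¹ + (1/2)Σ⁻¹(x−μ)(x−μ)ᵀΣ⁻¹, Y(x) = Σ⁻¹(x−μ), and K = Σ⁻¹, for all indices a, b, c, d one has ∫ M(x)_{ab}·Y(x)_c·Y(x)_d dν(x) = (1/2)(K_{ac}K_{bd} + K_{ad}K_{bc}). (This is the Amari–Chentsov component C_{Σμμ} = Σ⁻¹⊗Σ⁻¹ of the multivariate Gaussian family, written in symmetrized component form.) -/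

import Mathlib

open MeasureTheory Matrix Real
open scoped ENNReal NNReal
open scoped MatrixOrder

/-- The Lebesgue density of the multivariate Gaussian distribution with mean `μ` and
covariance matrix `S` on `ℝⁿ`. -/
noncomputable def mvGaussDensity {n : ℕ} (μ : Fin n → ℝ) (S : Matrix (Fin n) (Fin n) ℝ)
    (x : Fin n → ℝ) : ℝ :=
  (2 * π) ^ (-(n : ℝ) / 2) * S.det ^ (-(1 : ℝ) / 2) *
    Real.exp (-(1 / 2) * ((x - μ) ⬝ᵥ (S⁻¹ *ᵥ (x - μ))))

/-- The multivariate Gaussian measure `ν_{μ,Σ}` on `ℝⁿ`, given by its Lebesgue density. -/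
noncomputable def mvGaussMeasure {n : ℕ} (μ : Fin n → ℝ) (S : Matrix (Fin n) (Fin n) ℝ) :
    Measure (Fin n → ℝ) :=
  volume.withDensity fun x => ENNReal.ofReal (mvGaussDensity μ S x)

/-- The score of the multivariate Gaussian log-likelihood with respect to the covariance
parameter: M(x) = −(1/2)Σ⁻¹ + (1/2)Σ⁻¹(x−μ)(x−μ)ᵀΣ⁻¹. -/
noncomputable def mvScoreSigma {n : ℕ} (μ : Fin n → ℝ) (S : Matrix (Fin n) (Fin n) ℝ)
    (x : Fin n → ℝ) : Matrix (Fin n) (Fin n) ℝ :=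
  (-(1 / 2) : ℝ) • S⁻¹ + ((1 / 2) : ℝ) • (S⁻¹ * Matrix.vecMulVec (x - μ) (x - μ) * S⁻¹)


section AuxGaussian

noncomputable def gphi (t : ℝ) : ℝ := (2 * π) ^ (-(1:ℝ)/2) * Real.exp (-(1/2) * t ^ 2)

lemma gphi_cont : Continuous gphi := by
  unfold gphi; fun_prop

lemma integrable_pow_mul_gauss (p : ℕ) :
    Integrable fun t : ℝ => t ^ p * Real.exp (-(1/2) * t ^ 2) := by
  have hg : Integrable fun t : ℝ =>
      ((p.factorial : ℝ) * Real.exp 1) * Real.exp (-(1/4 : ℝ) * t ^ 2) :=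
    (integrable_exp_neg_mul_sq (by norm_num)).const_mul _
  refine hg.mono' (Continuous.aestronglyMeasurable (by fun_prop)) ?_
  filter_upwards with t
  have h1 : |t| ^ p ≤ (p.factorial : ℝ) * Real.exp |t| := by
    have := Real.pow_div_factorial_le_exp |t| (abs_nonneg t) p
    have hp : (0:ℝ) < p.factorial := by positivity
    rw [div_le_iff₀ hp] at this
    linarith [this]
  have h2 : Real.exp (|t| - (1/2) * t ^ 2) ≤ Real.exp (1 - (1/4) * t ^ 2) := by
    apply Real.exp_le_exp.2
    nlinarith [sq_abs t, sq_nonneg (|t| - 2)]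
  calc ‖t ^ p * Real.exp (-(1/2) * t ^ 2)‖
      = |t| ^ p * Real.exp (-(1/2) * t ^ 2) := by
        rw [norm_mul, norm_pow, Real.norm_eq_abs, Real.norm_eq_abs,
          abs_of_pos (Real.exp_pos _)]
    _ ≤ ((p.factorial : ℝ) * Real.exp |t|) * Real.exp (-(1/2) * t ^ 2) := by
        apply mul_le_mul_of_nonneg_right h1 (Real.exp_pos _).le
    _ = (p.factorial : ℝ) * Real.exp (|t| - (1/2) * t ^ 2) := by
        rw [mul_assoc, ← Real.exp_add]; ring_nf
    _ ≤ (p.factorial : ℝ) * Real.exp (1 - (1/4) * t ^ 2) := by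
        apply mul_le_mul_of_nonneg_left h2 (by positivity)
    _ = ((p.factorial : ℝ) * Real.exp 1) * Real.exp (-(1/4 : ℝ) * t ^ 2) := by
        rw [mul_assoc, ← Real.exp_add]
        ring_nf

noncomputable def gmom (p : ℕ) : ℝ := ∫ t : ℝ, t ^ p * Real.exp (-(1/2) * t ^ 2)

lemma gmom_zero : gmom 0 = Real.sqrt (2 * π) := by
  unfold gmom
  simp only [pow_zero, one_mul]
  rw [integral_gaussian (1/2 : ℝ), show (π / (1/2) : ℝ) = 2 * π by ring]

lemma gmom_one : gmom 1 = 0 := by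
  unfold gmom
  have hderiv : ∀ t : ℝ, HasDerivAt (fun t : ℝ => -Real.exp (-(1/2) * t ^ 2))
      (t ^ 1 * Real.exp (-(1/2) * t ^ 2)) t := by
    intro t
    have h1 : HasDerivAt (fun t : ℝ => -(1/2) * t ^ 2) (-(1/2) * (2 * t)) t :=
      (hasDerivAt_pow 2 t).const_mul _ |>.congr_deriv (by ring)
    have : HasDerivAt (fun t : ℝ => -Real.exp (-(1/2) * t ^ 2)) _ t := (h1.exp).neg
    convert this using 1
    ring
  exact integral_eq_zero_of_hasDerivAt_of_integrable hderiv
    (integrable_pow_mul_gauss 1) ((integrable_exp_neg_mul_sq (by norm_num)).neg)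

lemma gmom_rec (p : ℕ) : gmom (p + 2) = (p + 1) * gmom p := by
  have hderiv : ∀ t : ℝ, HasDerivAt (fun t : ℝ => t ^ (p+1) * Real.exp (-(1/2) * t ^ 2))
      ((p+1 : ℝ) * (t ^ p * Real.exp (-(1/2) * t ^ 2))
        - t ^ (p+2) * Real.exp (-(1/2) * t ^ 2)) t := by
    intro t
    have h1 : HasDerivAt (fun t : ℝ => -(1/2) * t ^ 2) (-(1/2) * (2 * t)) t :=
      (hasDerivAt_pow 2 t).const_mul _ |>.congr_deriv (by ring)
    have : HasDerivAt (fun t : ℝ => t ^ (p+1) * Real.exp (-(1/2) * t ^ 2)) _ t :=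
      (hasDerivAt_pow (p+1) t).mul h1.exp
    convert this using 1
    push_cast
    ring
  have h0 := integral_eq_zero_of_hasDerivAt_of_integrable hderiv
    (((integrable_pow_mul_gauss p).const_mul _).sub (integrable_pow_mul_gauss (p+2)))
    (integrable_pow_mul_gauss (p+1))
  rw [integral_sub ((integrable_pow_mul_gauss p).const_mul _) (integrable_pow_mul_gauss (p+2)),
    integral_const_mul] at h0
  unfold gmom
  linarith [h0]

noncomputable def gm (p : ℕ) : ℝ := ∫ t : ℝ, t ^ p * gphi t

lemma integrable_pow_mul_gphi (p : ℕ) : Integrable fun t : ℝ => t ^ p * gphi t := by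
  have : (fun t : ℝ => t ^ p * gphi t)
      = fun t : ℝ => (2 * π) ^ (-(1:ℝ)/2) * (t ^ p * Real.exp (-(1/2) * t ^ 2)) := by
    funext t; unfold gphi; ring
  rw [this]
  exact (integrable_pow_mul_gauss p).const_mul _

lemma gm_eq (p : ℕ) : gm p = (2 * π) ^ (-(1:ℝ)/2) * gmom p := by
  unfold gm gmom
  rw [← integral_const_mul]
  congr 1; funext t; unfold gphi; ring

lemma const_mul_sqrt : (2 * π) ^ (-(1:ℝ)/2) * Real.sqrt (2 * π) = 1 := by
  rw [Real.sqrt_eq_rpow, show ((1:ℝ)/2) = (1/2 : ℝ) from rfl,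
    ← Real.rpow_add Real.two_pi_pos]
  norm_num

lemma gm_zero : gm 0 = 1 := by rw [gm_eq, gmom_zero, const_mul_sqrt]
lemma gm_one : gm 1 = 0 := by rw [gm_eq, gmom_one, mul_zero]
lemma gm_two : gm 2 = 1 := by
  rw [gm_eq, show (2:ℕ) = 0 + 2 from rfl, gmom_rec, gmom_zero]
  push_cast
  rw [show ((0:ℝ)+1) * Real.sqrt (2*π) = Real.sqrt (2*π) by ring]
  exact const_mul_sqrt
lemma gm_three : gm 3 = 0 := by
  rw [gm_eq, show (3:ℕ) = 1 + 2 from rfl, gmom_rec, gmom_one]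
  ring
lemma gm_four : gm 4 = 3 := by
  have h2 : gmom 2 = Real.sqrt (2 * π) := by
    rw [show (2:ℕ) = 0 + 2 from rfl, gmom_rec, gmom_zero]; push_cast; ring
  rw [gm_eq, show (4:ℕ) = 2 + 2 from rfl, gmom_rec, h2]
  push_cast
  rw [show ((2:ℝ)+1) * Real.sqrt (2*π) = 3 * Real.sqrt (2*π) by ring]
  rw [show (2*π) ^ (-(1:ℝ)/2) * (3 * Real.sqrt (2*π)) = 3 * ((2*π) ^ (-(1:ℝ)/2) * Real.sqrt (2*π)) by ring,
    const_mul_sqrt, mul_one]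

variable {n : ℕ}

lemma integrable_prod_pow_gphi (e : Fin n → ℕ) :
    Integrable fun u : Fin n → ℝ => ∏ i, (u i ^ e i * gphi (u i)) :=
  Integrable.fintype_prod (f := fun i t => t ^ e i * gphi t) fun i => integrable_pow_mul_gphi (e i)

lemma integral_prod_pow_gphi (e : Fin n → ℕ) :
    ∫ u : Fin n → ℝ, ∏ i, (u i ^ e i * gphi (u i)) = ∏ i, gm (e i) :=
  integral_fintype_prod_eq_prod (fun i t => t ^ e i * gphi t)

variable {n : ℕ}

def ind (j i : Fin n) : ℕ := if j = i then 1 else 0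

lemma prod_pow_ind (u : Fin n → ℝ) (j : Fin n) : ∏ i, u i ^ ind j i = u j := by
  have h : ∀ i ∈ Finset.univ, u i ^ ind j i = if j = i then u i else 1 := by
    intro i _; unfold ind; split <;> simp
  rw [Finset.prod_congr rfl h, Finset.prod_ite_eq]
  simp

lemma mono2 (u : Fin n → ℝ) (j k : Fin n) :
    u j * u k * ∏ i, gphi (u i) = ∏ i, (u i ^ (ind j i + ind k i) * gphi (u i)) := by
  rw [Finset.prod_mul_distrib]
  congr 1
  simp_rw [pow_add]
  rw [Finset.prod_mul_distrib, prod_pow_ind, prod_pow_ind]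

lemma mono4 (u : Fin n → ℝ) (j k l m : Fin n) :
    u j * u k * u l * u m * ∏ i, gphi (u i)
      = ∏ i, (u i ^ (ind j i + ind k i + ind l i + ind m i) * gphi (u i)) := by
  rw [Finset.prod_mul_distrib]
  congr 1
  simp_rw [pow_add]
  rw [Finset.prod_mul_distrib, Finset.prod_mul_distrib, Finset.prod_mul_distrib,
    prod_pow_ind, prod_pow_ind, prod_pow_ind, prod_pow_ind]

lemma prod_gm_subset (e : Fin n → ℕ) (s : Finset (Fin n)) (h : ∀ i, i ∉ s → e i = 0) :
    ∏ i, gm (e i) = ∏ i ∈ s, gm (e i) := by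
  refine (Finset.prod_subset (Finset.subset_univ s) ?_).symm
  intro i _ hi; rw [h i hi, gm_zero]

lemma integrable_mono2 (j k : Fin n) :
    Integrable fun u : Fin n → ℝ => u j * u k * ∏ i, gphi (u i) := by
  simp_rw [mono2]
  exact integrable_prod_pow_gphi _

lemma integral_mono2 (j k : Fin n) :
    ∫ u : Fin n → ℝ, u j * u k * ∏ i, gphi (u i) = if j = k then 1 else 0 := by
  simp_rw [mono2, integral_prod_pow_gphi]
  rcases eq_or_ne j k with h | h
  · subst h
    simp only [if_pos rfl]
    refine Finset.prod_eq_one fun i _ => ?_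
    rcases eq_or_ne j i with h1 | h1 <;> simp [ind, h1, gm_zero, gm_two]
  · rw [if_neg h]
    refine Finset.prod_eq_zero (Finset.mem_univ j) ?_
    simp [ind, h, Ne.symm h, gm_one]

lemma integrable_mono4 (j k l m : Fin n) :
    Integrable fun u : Fin n → ℝ => u j * u k * u l * u m * ∏ i, gphi (u i) := by
  simp_rw [mono4]
  exact integrable_prod_pow_gphi _

lemma integral_mono4 (j k l m : Fin n) :
    ∫ u : Fin n → ℝ, u j * u k * u l * u m * ∏ i, gphi (u i)
      = (if j = k then (1:ℝ) else 0) * (if l = m then 1 else 0)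
        + (if j = l then 1 else 0) * (if k = m then 1 else 0)
        + (if j = m then 1 else 0) * (if k = l then 1 else 0) := by
  simp_rw [mono4, integral_prod_pow_gphi]
  by_cases hjk : j = k
  · subst hjk
    by_cases hjl : j = l
    · subst hjl
      by_cases hjm : j = m
      · subst hjm
        rw [prod_gm_subset _ {j} (fun i hi => by
            simp only [Finset.mem_singleton] at hi
            simp [ind, show j ≠ i from fun h => hi h.symm]),
          Finset.prod_singleton]
        norm_num [ind, gm_four]
      · rw [Finset.prod_eq_zero (Finset.mem_univ m)
          (by simp [ind, hjm, gm_one])]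
        simp [hjm]
    · by_cases hjm : j = m
      · subst hjm
        rw [Finset.prod_eq_zero (Finset.mem_univ l)
          (by simp [ind, hjl, gm_one])]
        simp [hjl, Ne.symm hjl]
      · by_cases hlm : l = m
        · subst hlm
          rw [Finset.prod_eq_one (fun i _ => ?_)]
          · simp [hjl, hjm]
          · rcases eq_or_ne j i with h1 | h1 <;> rcases eq_or_ne l i with h2 | h2
            · exact absurd (h1.trans h2.symm) hjl
            · simp [ind, h1, h2, gm_two]
            · simp [ind, h1, h2, gm_two]
            · simp [ind, h1, h2, gm_zero]
        · rw [Finset.prod_eq_zero (Finset.mem_univ l)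
            (by simp [ind, hjl, Ne.symm hlm, gm_one])]
          simp [hjl, hjm, hlm]
  · by_cases hjl : j = l
    · subst hjl
      by_cases hkm : k = m
      · subst hkm
        rw [Finset.prod_eq_one (fun i _ => ?_)]
        · simp [hjk]
        · rcases eq_or_ne j i with h1 | h1 <;> rcases eq_or_ne k i with h2 | h2
          · exact absurd (h1.trans h2.symm) hjk
          · simp [ind, h1, h2, gm_two]
          · simp [ind, h1, h2, gm_two]
          · simp [ind, h1, h2, gm_zero]
      · rw [Finset.prod_eq_zero (Finset.mem_univ k)
          (by simp [ind, hjk, Ne.symm hkm, gm_one])]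
        simp [hjk, hkm, Ne.symm hjk]
    · by_cases hjm : j = m
      · subst hjm
        by_cases hkl : k = l
        · subst hkl
          rw [Finset.prod_eq_one (fun i _ => ?_)]
          · simp [hjk, hjl]
          · rcases eq_or_ne j i with h1 | h1 <;> rcases eq_or_ne k i with h2 | h2
            · exact absurd (h1.trans h2.symm) hjk
            · simp [ind, h1, h2, gm_two]
            · simp [ind, h1, h2, gm_two]
            · simp [ind, h1, h2, gm_zero]
        · rw [Finset.prod_eq_zero (Finset.mem_univ k)
            (by simp [ind, hjk, Ne.symm hkl, gm_one])]
          simp [hjk, hjl, hkl]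
      · rw [Finset.prod_eq_zero (Finset.mem_univ j)
          (by simp [ind, Ne.symm hjk, Ne.symm hjl, Ne.symm hjm, gm_one])]
        simp [hjk, hjl, hjm]

variable {n : ℕ} (C : Matrix (Fin n) (Fin n) ℝ)

lemma expand2 (c d : Fin n) (u : Fin n → ℝ) :
    (C *ᵥ u) c * (C *ᵥ u) d * ∏ i, gphi (u i)
      = ∑ j, ∑ k, C c j * C d k * (u j * u k * ∏ i, gphi (u i)) := by
  simp only [mulVec, dotProduct]
  rw [Finset.sum_mul_sum, Finset.sum_mul]
  refine Finset.sum_congr rfl fun j _ => ?_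
  rw [Finset.sum_mul]
  refine Finset.sum_congr rfl fun k _ => ?_
  ring

lemma integrable2 (c d : Fin n) :
    Integrable fun u : Fin n → ℝ => (C *ᵥ u) c * (C *ᵥ u) d * ∏ i, gphi (u i) := by
  simp_rw [expand2]
  refine integrable_finset_sum _ fun j _ => integrable_finset_sum _ fun k _ => ?_
  exact (integrable_mono2 j k).const_mul _

lemma integral2 (c d : Fin n) :
    ∫ u : Fin n → ℝ, (C *ᵥ u) c * (C *ᵥ u) d * ∏ i, gphi (u i) = (C * Cᵀ) c d := by
  simp_rw [expand2]
  rw [integral_finset_sum _ fun j _ => integrable_finset_sum _ fun k _ =>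
    (integrable_mono2 j k).const_mul _]
  have : ∀ j, ∫ u : Fin n → ℝ, ∑ k, C c j * C d k * (u j * u k * ∏ i, gphi (u i))
      = ∑ k, C c j * C d k * (if j = k then (1:ℝ) else 0) := by
    intro j
    rw [integral_finset_sum _ fun k _ => (integrable_mono2 j k).const_mul _]
    refine Finset.sum_congr rfl fun k _ => ?_
    rw [integral_const_mul, integral_mono2]
  simp_rw [this]
  simp [mul_ite, mul_one, mul_zero, Finset.sum_ite_eq, Matrix.mul_apply]

lemma sum_mul_sum4 (f g h q : Fin n → ℝ) (P : ℝ) :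
    (∑ j, f j) * (∑ k, g k) * (∑ l, h l) * (∑ m, q m) * P
      = ∑ j, ∑ k, ∑ l, ∑ m, f j * g k * h l * q m * P := by
  have h1 : (∑ j, f j) * (∑ k, g k) = ∑ j, ∑ k, f j * g k :=
    Finset.sum_mul_sum _ _ _ _
  rw [h1]
  have h2 : (∑ j, ∑ k, f j * g k) * (∑ l, h l) = ∑ j, ∑ k, ∑ l, f j * g k * h l := by
    rw [Finset.sum_mul]
    refine Finset.sum_congr rfl fun j _ => ?_
    rw [Finset.sum_mul]
    refine Finset.sum_congr rfl fun k _ => ?_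
    rw [Finset.mul_sum]
  rw [h2]
  have h3 : (∑ j, ∑ k, ∑ l, f j * g k * h l) * (∑ m, q m)
      = ∑ j, ∑ k, ∑ l, ∑ m, f j * g k * h l * q m := by
    rw [Finset.sum_mul]
    refine Finset.sum_congr rfl fun j _ => ?_
    rw [Finset.sum_mul]
    refine Finset.sum_congr rfl fun k _ => ?_
    rw [Finset.sum_mul]
    refine Finset.sum_congr rfl fun l _ => ?_
    rw [Finset.mul_sum]
  rw [h3, Finset.sum_mul]
  refine Finset.sum_congr rfl fun j _ => ?_
  rw [Finset.sum_mul]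
  refine Finset.sum_congr rfl fun k _ => ?_
  rw [Finset.sum_mul]
  refine Finset.sum_congr rfl fun l _ => ?_
  rw [Finset.sum_mul]

lemma expand4 (a b c d : Fin n) (u : Fin n → ℝ) :
    (C *ᵥ u) a * (C *ᵥ u) b * (C *ᵥ u) c * (C *ᵥ u) d * ∏ i, gphi (u i)
      = ∑ j, ∑ k, ∑ l, ∑ m,
          C a j * C b k * C c l * C d m * (u j * u k * u l * u m * ∏ i, gphi (u i)) := by
  simp only [mulVec, dotProduct]
  rw [sum_mul_sum4]
  refine Finset.sum_congr rfl fun j _ => ?_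
  refine Finset.sum_congr rfl fun k _ => ?_
  refine Finset.sum_congr rfl fun l _ => ?_
  refine Finset.sum_congr rfl fun m _ => ?_
  ring

lemma integrable4 (a b c d : Fin n) :
    Integrable fun u : Fin n → ℝ =>
      (C *ᵥ u) a * (C *ᵥ u) b * (C *ᵥ u) c * (C *ᵥ u) d * ∏ i, gphi (u i) := by
  simp_rw [expand4]
  refine integrable_finset_sum _ fun j _ => integrable_finset_sum _ fun k _ =>
    integrable_finset_sum _ fun l _ => integrable_finset_sum _ fun m _ => ?_
  exact (integrable_mono4 j k l m).const_mul _

lemma Hcollapse (f : Fin n → ℝ) (t : Fin n) :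
    ∑ m, f m * (if t = m then (1:ℝ) else 0) = f t := by
  simp [mul_ite, mul_one, mul_zero, Finset.sum_ite_eq]

lemma T1sum (a b c d : Fin n) :
    ∑ j, ∑ k, ∑ l, ∑ m, C a j * C b k * C c l * C d m
        * ((if j = k then (1:ℝ) else 0) * (if l = m then 1 else 0))
      = (∑ j, C a j * C b j) * (∑ l, C c l * C d l) := by
  have inner : ∀ j k : Fin n, (∑ l, ∑ m, C a j * C b k * C c l * C d m
        * ((if j = k then (1:ℝ) else 0) * (if l = m then 1 else 0)))
      = (C a j * C b k * (if j = k then (1:ℝ) else 0)) * ∑ l, C c l * C d l := by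
    intro j k
    rw [Finset.mul_sum]
    refine Finset.sum_congr rfl fun l _ => ?_
    calc (∑ m, C a j * C b k * C c l * C d m
            * ((if j = k then (1:ℝ) else 0) * (if l = m then 1 else 0)))
        = (C a j * C b k * (if j = k then (1:ℝ) else 0))
            * ∑ m, (C c l * C d m) * (if l = m then (1:ℝ) else 0) := by
          rw [Finset.mul_sum]
          refine Finset.sum_congr rfl fun m _ => ?_
          ring
      _ = C a j * C b k * (if j = k then (1:ℝ) else 0) * (C c l * C d l) := by
          rw [Hcollapse (fun m => C c l * C d m) l]
  simp_rw [inner]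
  rw [Finset.sum_mul]
  refine Finset.sum_congr rfl fun j _ => ?_
  calc (∑ k, C a j * C b k * (if j = k then (1:ℝ) else 0) * ∑ l, C c l * C d l)
      = (∑ k, (C a j * C b k) * (if j = k then (1:ℝ) else 0)) * ∑ l, C c l * C d l := by
        rw [Finset.sum_mul]
    _ = C a j * C b j * ∑ l, C c l * C d l := by
        rw [Hcollapse (fun k => C a j * C b k) j]

lemma T2sum (a b c d : Fin n) :
    ∑ j, ∑ k, ∑ l, ∑ m, C a j * C b k * C c l * C d m
        * ((if j = l then (1:ℝ) else 0) * (if k = m then 1 else 0))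
      = (∑ j, C a j * C c j) * (∑ k, C b k * C d k) := by
  have inner : ∀ j k : Fin n, (∑ l, ∑ m, C a j * C b k * C c l * C d m
        * ((if j = l then (1:ℝ) else 0) * (if k = m then 1 else 0)))
      = (C a j * C c j) * (C b k * C d k) := by
    intro j k
    calc (∑ l, ∑ m, C a j * C b k * C c l * C d m
            * ((if j = l then (1:ℝ) else 0) * (if k = m then 1 else 0)))
        = ∑ l, ((C a j * C c l) * (if j = l then (1:ℝ) else 0))
            * ∑ m, (C b k * C d m) * (if k = m then (1:ℝ) else 0) := by
          refine Finset.sum_congr rfl fun l _ => ?_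
          rw [Finset.mul_sum]
          refine Finset.sum_congr rfl fun m _ => ?_
          ring
      _ = ∑ l, ((C a j * C c l) * (if j = l then (1:ℝ) else 0)) * (C b k * C d k) := by
          refine Finset.sum_congr rfl fun l _ => ?_
          rw [Hcollapse (fun m => C b k * C d m) k]
      _ = (∑ l, (C a j * C c l) * (if j = l then (1:ℝ) else 0)) * (C b k * C d k) := by
          rw [Finset.sum_mul]
      _ = (C a j * C c j) * (C b k * C d k) := by
          rw [Hcollapse (fun l => C a j * C c l) j]
  simp_rw [inner]
  rw [Finset.sum_mul_sum]

lemma T3sum (a b c d : Fin n) :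
    ∑ j, ∑ k, ∑ l, ∑ m, C a j * C b k * C c l * C d m
        * ((if j = m then (1:ℝ) else 0) * (if k = l then 1 else 0))
      = (∑ j, C a j * C d j) * (∑ k, C b k * C c k) := by
  have inner : ∀ j k : Fin n, (∑ l, ∑ m, C a j * C b k * C c l * C d m
        * ((if j = m then (1:ℝ) else 0) * (if k = l then 1 else 0)))
      = (C a j * C d j) * (C b k * C c k) := by
    intro j k
    calc (∑ l, ∑ m, C a j * C b k * C c l * C d m
            * ((if j = m then (1:ℝ) else 0) * (if k = l then 1 else 0)))
        = ∑ l, ((C b k * C c l) * (if k = l then (1:ℝ) else 0))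
            * ∑ m, (C a j * C d m) * (if j = m then (1:ℝ) else 0) := by
          refine Finset.sum_congr rfl fun l _ => ?_
          rw [Finset.mul_sum]
          refine Finset.sum_congr rfl fun m _ => ?_
          ring
      _ = ∑ l, ((C b k * C c l) * (if k = l then (1:ℝ) else 0)) * (C a j * C d j) := by
          refine Finset.sum_congr rfl fun l _ => ?_
          rw [Hcollapse (fun m => C a j * C d m) j]
      _ = (∑ l, (C b k * C c l) * (if k = l then (1:ℝ) else 0)) * (C a j * C d j) := by
          rw [Finset.sum_mul]
      _ = (C b k * C c k) * (C a j * C d j) := by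
          rw [Hcollapse (fun l => C b k * C c l) k]
      _ = (C a j * C d j) * (C b k * C c k) := by ring
  simp_rw [inner]
  rw [Finset.sum_mul_sum]

lemma integral4 (a b c d : Fin n) :
    ∫ u : Fin n → ℝ, (C *ᵥ u) a * (C *ᵥ u) b * (C *ᵥ u) c * (C *ᵥ u) d * ∏ i, gphi (u i)
      = (C * Cᵀ) a b * (C * Cᵀ) c d + (C * Cᵀ) a c * (C * Cᵀ) b d
        + (C * Cᵀ) a d * (C * Cᵀ) b c := by
  simp_rw [expand4]
  rw [integral_finset_sum _ fun j _ => integrable_finset_sum _ fun k _ =>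
    integrable_finset_sum _ fun l _ => integrable_finset_sum _ fun m _ =>
    (integrable_mono4 j k l m).const_mul _]
  have h1 : ∀ j, ∫ u : Fin n → ℝ, ∑ k, ∑ l, ∑ m,
      C a j * C b k * C c l * C d m * (u j * u k * u l * u m * ∏ i, gphi (u i))
      = ∑ k, ∑ l, ∑ m, C a j * C b k * C c l * C d m *
        ((if j = k then (1:ℝ) else 0) * (if l = m then 1 else 0)
          + (if j = l then 1 else 0) * (if k = m then 1 else 0)
          + (if j = m then 1 else 0) * (if k = l then 1 else 0)) := by
    intro j
    rw [integral_finset_sum _ fun k _ => integrable_finset_sum _ fun l _ =>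
      integrable_finset_sum _ fun m _ => (integrable_mono4 j k l m).const_mul _]
    refine Finset.sum_congr rfl fun k _ => ?_
    rw [integral_finset_sum _ fun l _ => integrable_finset_sum _ fun m _ =>
      (integrable_mono4 j k l m).const_mul _]
    refine Finset.sum_congr rfl fun l _ => ?_
    rw [integral_finset_sum _ fun m _ => (integrable_mono4 j k l m).const_mul _]
    refine Finset.sum_congr rfl fun m _ => ?_
    rw [integral_const_mul, integral_mono4]
  simp_rw [h1, mul_add, Finset.sum_add_distrib]
  rw [T1sum, T2sum, T3sum]
  have hCC : ∀ x y : Fin n, (C * Cᵀ) x y = ∑ j, C x j * C y j := by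
    intro x y
    simp [Matrix.mul_apply]
  rw [hCC a b, hCC c d, hCC a c, hCC b d, hCC a d, hCC b c]

end AuxGaussian

/-- The Amari–Chentsov component C_{Σμμ} = Σ⁻¹⊗Σ⁻¹ of the multivariate Gaussian family in
symmetrized component form: with K = Σ⁻¹ and Y(x) = Σ⁻¹(x−μ),
∫ M_{ab} Y_c Y_d dν = (1/2)(K_{ac}K_{bd} + K_{ad}K_{bc}). -/
theorem mvGaussian_AC_Sigma_mu_mu (n : ℕ) (hn : 1 ≤ n) (μ : Fin n → ℝ)
    (S : Matrix (Fin n) (Fin n) ℝ) (hS : S.PosDef) (hSsymm : S.IsSymm) (a b c d : Fin n) :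
    ∫ x, mvScoreSigma μ S x a b * (S⁻¹ *ᵥ (x - μ)) c * (S⁻¹ *ᵥ (x - μ)) d
        ∂(mvGaussMeasure μ S) =
      (1 / 2) * (S⁻¹ a c * S⁻¹ b d + S⁻¹ a d * S⁻¹ b c) := by
  classical
  have hps : S.PosSemidef := hS.posSemidef
  set B : Matrix (Fin n) (Fin n) ℝ := CFC.sqrt S with hBdef
  have hBB : B * B = S := CFC.sqrt_mul_sqrt_self S hps.nonneg
  have hBsym : Bᵀ = B := by
    have := (CFC.sqrt_nonneg S).posSemidef.isHermitian
    rwa [Matrix.IsHermitian, Matrix.conjTranspose_eq_transpose_of_trivial] at this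
  have hdetS : 0 < S.det := hS.det_pos
  have hdetB2 : B.det * B.det = S.det := by rw [← Matrix.det_mul, hBB]
  have hdetB : B.det ≠ 0 := by
    intro h
    rw [h, mul_zero] at hdetB2
    exact hdetS.ne hdetB2
  have hBunit : IsUnit B.det := (Ne.isUnit hdetB)
  set C : Matrix (Fin n) (Fin n) ℝ := B⁻¹ with hCdef
  have hKBB : S⁻¹ = C * C := by rw [hCdef, ← hBB, Matrix.mul_inv_rev]
  have hCsym : Cᵀ = C := by rw [hCdef, Matrix.transpose_nonsing_inv, hBsym]
  have hCCT : C * Cᵀ = S⁻¹ := by rw [hCsym, hKBB]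
  have hKsym : ∀ i j, S⁻¹ i j = S⁻¹ j i := by
    intro i j
    have h1 : S⁻¹ᵀ = S⁻¹ := by rw [Matrix.transpose_nonsing_inv, hSsymm.eq]
    conv_lhs => rw [← h1]
    exact Matrix.transpose_apply _ i j
  -- Y composition
  have hY : ∀ u : Fin n → ℝ, S⁻¹ *ᵥ (B *ᵥ u) = C *ᵥ u := by
    intro u
    rw [Matrix.mulVec_mulVec, hKBB, Matrix.mul_assoc, hCdef,
      Matrix.nonsing_inv_mul B hBunit, Matrix.mul_one]
  -- score entry
  have hscore : ∀ x : Fin n → ℝ, mvScoreSigma μ S x a b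
      = -(1/2) * S⁻¹ a b
        + (1/2) * ((S⁻¹ *ᵥ (x - μ)) a * (S⁻¹ *ᵥ (x - μ)) b) := by
    intro x
    show ((-(1 / 2) : ℝ) • S⁻¹ + ((1 / 2) : ℝ) •
        (S⁻¹ * Matrix.vecMulVec (x - μ) (x - μ) * S⁻¹)) a b = _
    rw [Matrix.add_apply, Matrix.smul_apply, Matrix.smul_apply, smul_eq_mul, smul_eq_mul]
    have hV : (S⁻¹ * Matrix.vecMulVec (x - μ) (x - μ) * S⁻¹) a b
        = (S⁻¹ *ᵥ (x - μ)) a * (S⁻¹ *ᵥ (x - μ)) b := by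
      set z := x - μ with hz
      calc (S⁻¹ * Matrix.vecMulVec z z * S⁻¹) a b
          = ∑ k, (∑ j, S⁻¹ a j * (z j * z k)) * S⁻¹ k b := by
            simp [Matrix.mul_apply, Matrix.vecMulVec_apply]
        _ = ∑ k, ∑ j, (S⁻¹ a j * (z j * z k)) * S⁻¹ k b := by
            refine Finset.sum_congr rfl fun k _ => ?_
            rw [Finset.sum_mul]
        _ = ∑ j, ∑ k, (S⁻¹ a j * (z j * z k)) * S⁻¹ k b := Finset.sum_comm
        _ = (∑ j, S⁻¹ a j * z j) * (∑ k, S⁻¹ b k * z k) := by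
            rw [Finset.sum_mul_sum]
            refine Finset.sum_congr rfl fun j _ => Finset.sum_congr rfl fun k _ => ?_
            rw [hKsym k b]
            ring
        _ = (S⁻¹ *ᵥ z) a * (S⁻¹ *ᵥ z) b := by
            simp [Matrix.mulVec, dotProduct]
    rw [hV]
  -- continuity facts
  have hYcont : ∀ i : Fin n, Continuous fun x : Fin n → ℝ => (S⁻¹ *ᵥ (x - μ)) i := by
    intro i
    simp only [Matrix.mulVec, dotProduct, Pi.sub_apply]
    exact continuous_finset_sum _ fun j _ =>
      (continuous_const.mul ((continuous_apply j).sub continuous_const))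
  have hdens_cont : Continuous fun x : Fin n → ℝ => mvGaussDensity μ S x := by
    unfold mvGaussDensity
    refine Continuous.mul continuous_const ?_
    refine Real.continuous_exp.comp ?_
    refine Continuous.mul continuous_const ?_
    simp only [dotProduct, Matrix.mulVec, Pi.sub_apply]
    refine continuous_finset_sum _ fun i _ => ?_
    refine Continuous.mul ((continuous_apply i).sub continuous_const) ?_
    exact continuous_finset_sum _ fun j _ =>
      (continuous_const.mul ((continuous_apply j).sub continuous_const))
  have hdens_nonneg : ∀ x, 0 ≤ mvGaussDensity μ S x := by
    intro x
    unfold mvGaussDensity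
    have h1 : (0:ℝ) ≤ (2 * π) ^ (-(n : ℝ) / 2) := Real.rpow_nonneg (by positivity) _
    have h2 : (0:ℝ) ≤ S.det ^ (-(1 : ℝ) / 2) := Real.rpow_nonneg hdetS.le _
    positivity
  -- change of variables
  have hcov : ∀ f : (Fin n → ℝ) → ℝ, Continuous f →
      ∫ x, f x = |B.det| * ∫ u, f (μ + B *ᵥ u) := by
    intro f hf
    have hT : Measurable (Matrix.toLin' B) :=
      (Matrix.toLin' B).continuous_of_finiteDimensional.measurable
    have hfm : AEStronglyMeasurable (fun y : Fin n → ℝ => f (μ + y))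
        (Measure.map (Matrix.toLin' B) volume) :=
      Continuous.aestronglyMeasurable (by fun_prop)
    have h1 : ∫ y, f (μ + y) ∂(Measure.map (Matrix.toLin' B) volume)
        = ∫ u, f (μ + B *ᵥ u) := by
      rw [integral_map hT.aemeasurable hfm]
      simp only [Matrix.toLin'_apply]
    rw [← h1, Real.map_matrix_volume_pi_eq_smul_volume_pi hdetB, integral_smul_measure,
      ENNReal.toReal_ofReal (abs_nonneg _), integral_add_left_eq_self]
    rw [smul_eq_mul, ← mul_assoc, abs_inv]
    rw [mul_inv_cancel₀ (abs_ne_zero.2 hdetB), one_mul]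
  -- density transformation
  have hdens : ∀ u : Fin n → ℝ,
      |B.det| * mvGaussDensity μ S (μ + B *ᵥ u) = ∏ i, gphi (u i) := by
    intro u
    have hz : (μ + B *ᵥ u) - μ = B *ᵥ u := add_sub_cancel_left μ (B *ᵥ u)
    have hquad : (B *ᵥ u) ⬝ᵥ (S⁻¹ *ᵥ (B *ᵥ u)) = ∑ i, u i * u i := by
      rw [hY u, Matrix.dotProduct_mulVec]
      have h2 : (B *ᵥ u) ᵥ* C = u := by
        rw [← hCsym, Matrix.vecMul_transpose, Matrix.mulVec_mulVec, hCdef,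
          Matrix.nonsing_inv_mul B hBunit, Matrix.one_mulVec]
      rw [h2]
      rfl
    unfold mvGaussDensity
    rw [hz, hquad]
    unfold gphi
    rw [Finset.prod_mul_distrib, Finset.prod_const, Finset.card_univ, Fintype.card_fin,
      ← Real.exp_sum]
    have hexp : ∑ i, -(1/2) * u i ^ 2 = -(1/2) * ∑ i, u i * u i := by
      rw [Finset.mul_sum]
      refine Finset.sum_congr rfl fun i _ => ?_
      ring
    rw [hexp]
    have hconst : |B.det| * ((2 * π) ^ (-(n : ℝ) / 2) * S.det ^ (-(1 : ℝ) / 2))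
        = ((2 * π) ^ (-(1:ℝ)/2)) ^ n := by
      have hSdet : S.det = |B.det| ^ (2:ℕ) := by
        rw [← hdetB2, sq_abs, sq]
      have h3 : S.det ^ (-(1 : ℝ) / 2) = |B.det|⁻¹ := by
        rw [hSdet, ← Real.rpow_natCast |B.det| 2, ← Real.rpow_mul (abs_nonneg _)]
        norm_num [Real.rpow_neg_one]
      have h4 : ((2 * π) ^ (-(1:ℝ)/2)) ^ n = (2 * π) ^ (-(n : ℝ) / 2) := by
        rw [← Real.rpow_natCast ((2 * π) ^ (-(1:ℝ)/2)) n, ← Real.rpow_mul (by positivity)]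
        congr 1
        ring
      rw [h3, h4]
      rw [mul_comm, mul_assoc, inv_mul_cancel₀ (abs_ne_zero.2 hdetB), mul_one]
    calc |B.det| * ((2 * π) ^ (-(n : ℝ) / 2) * S.det ^ (-(1 : ℝ) / 2)
            * Real.exp (-(1/2) * ∑ i, u i * u i))
        = (|B.det| * ((2 * π) ^ (-(n : ℝ) / 2) * S.det ^ (-(1 : ℝ) / 2)))
            * Real.exp (-(1/2) * ∑ i, u i * u i) := by ring
      _ = ((2 * π) ^ (-(1:ℝ)/2)) ^ n * Real.exp (-(1/2) * ∑ i, u i * u i) := by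
          rw [hconst]
  -- step 1 : withDensity to Lebesgue
  have hstep1 : ∫ x, mvScoreSigma μ S x a b * (S⁻¹ *ᵥ (x - μ)) c * (S⁻¹ *ᵥ (x - μ)) d
        ∂(mvGaussMeasure μ S)
      = ∫ x, mvGaussDensity μ S x *
          (mvScoreSigma μ S x a b * (S⁻¹ *ᵥ (x - μ)) c * (S⁻¹ *ᵥ (x - μ)) d) := by
    unfold mvGaussMeasure
    rw [show (fun x => ENNReal.ofReal (mvGaussDensity μ S x))
        = (fun x => ((mvGaussDensity μ S x).toNNReal : ℝ≥0∞)) from rfl]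
    rw [integral_withDensity_eq_integral_smul
      (hdens_cont.measurable.real_toNNReal)]
    refine integral_congr_ae (Filter.Eventually.of_forall fun x => ?_)
    simp only [NNReal.smul_def, Real.coe_toNNReal _ (hdens_nonneg x), smul_eq_mul]
  rw [hstep1]
  -- step 2 : change of variables
  have hg_cont : Continuous fun x : Fin n → ℝ => mvGaussDensity μ S x *
      (mvScoreSigma μ S x a b * (S⁻¹ *ᵥ (x - μ)) c * (S⁻¹ *ᵥ (x - μ)) d) := by
    refine hdens_cont.mul (Continuous.mul (Continuous.mul ?_ (hYcont c)) (hYcont d))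
    have : (fun x : Fin n → ℝ => mvScoreSigma μ S x a b)
        = fun x => -(1/2) * S⁻¹ a b
          + (1/2) * ((S⁻¹ *ᵥ (x - μ)) a * (S⁻¹ *ᵥ (x - μ)) b) := by
      funext x; exact hscore x
    rw [this]
    exact continuous_const.add (continuous_const.mul ((hYcont a).mul (hYcont b)))
  rw [hcov _ hg_cont]
  -- step 3 : pointwise identity under the integral
  have hpoint : ∀ u : Fin n → ℝ,
      mvGaussDensity μ S (μ + B *ᵥ u) *
          (mvScoreSigma μ S (μ + B *ᵥ u) a b * (S⁻¹ *ᵥ ((μ + B *ᵥ u) - μ)) c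
            * (S⁻¹ *ᵥ ((μ + B *ᵥ u) - μ)) d) * |B.det|
      = (-(1/2) * S⁻¹ a b) * ((C *ᵥ u) c * (C *ᵥ u) d * ∏ i, gphi (u i))
        + (1/2) * ((C *ᵥ u) a * (C *ᵥ u) b * (C *ᵥ u) c * (C *ᵥ u) d
            * ∏ i, gphi (u i)) := by
    intro u
    have hz : (μ + B *ᵥ u) - μ = B *ᵥ u := add_sub_cancel_left μ (B *ᵥ u)
    rw [hscore, hz, hY u]
    rw [← hdens u]
    ring
  calc |B.det| * (∫ u, mvGaussDensity μ S (μ + B *ᵥ u) *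
          (mvScoreSigma μ S (μ + B *ᵥ u) a b * (S⁻¹ *ᵥ ((μ + B *ᵥ u) - μ)) c
            * (S⁻¹ *ᵥ ((μ + B *ᵥ u) - μ)) d))
      = ∫ u, mvGaussDensity μ S (μ + B *ᵥ u) *
          (mvScoreSigma μ S (μ + B *ᵥ u) a b * (S⁻¹ *ᵥ ((μ + B *ᵥ u) - μ)) c
            * (S⁻¹ *ᵥ ((μ + B *ᵥ u) - μ)) d) * |B.det| := by
        rw [← integral_const_mul]
        refine integral_congr_ae (Filter.Eventually.of_forall fun u => ?_)
        ring
    _ = ∫ u, ((-(1/2) * S⁻¹ a b) * ((C *ᵥ u) c * (C *ᵥ u) d * ∏ i, gphi (u i))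
          + (1/2) * ((C *ᵥ u) a * (C *ᵥ u) b * (C *ᵥ u) c * (C *ᵥ u) d
              * ∏ i, gphi (u i))) := by
        refine integral_congr_ae (Filter.Eventually.of_forall fun u => ?_)
        exact hpoint u
    _ = (-(1/2) * S⁻¹ a b) * ((C * Cᵀ) c d)
          + (1/2) * ((C * Cᵀ) a b * (C * Cᵀ) c d + (C * Cᵀ) a c * (C * Cᵀ) b d
            + (C * Cᵀ) a d * (C * Cᵀ) b c) := by
        rw [integral_add ((integrable2 C c d).const_mul _) ((integrable4 C a b c d).const_mul _),
          integral_const_mul, integral_const_mul, integral2, integral4]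
    _ = (1 / 2) * (S⁻¹ a c * S⁻¹ b d + S⁻¹ a d * S⁻¹ b c) := by
        rw [hCCT]
        ring
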